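/- For every n ≥ 1, any C₄-free graph on n vertices has at most (1/2)n^{3/2} + (1/2)n edges. -/

import Mathlib

open Finset

private theorem kst_C4_key (n : ℕ) (G : SimpleGraph (Fin n)) [DecidableRel G.Adj]
    (hC4free : ∀ a b c d : Fin n, G.Adj a b → G.Adj b c → G.Adj c d → G.Adj d a →
      a = c ∨ b = d) :
    ∑ v : Fin n, (G.degree v * G.degree v - G.degree v) ≤ n * n - n := by
  classical
  set T : Finset (Fin n × Fin n × Fin n) :=
    univ.filter (fun t => G.Adj t.1 t.2.1 ∧ G.Adj t.1 t.2.2 ∧ t.2.1 ≠ t.2.2) with hT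
  -- lower: T.card = ∑ v, ...
  have h1 : T.card = ∑ v : Fin n, (G.degree v * G.degree v - G.degree v) := by
    rw [Finset.card_eq_sum_card_fiberwise (s := T) (t := univ)
      (f := fun t : Fin n × Fin n × Fin n => t.1) (fun x _ => mem_univ _)]
    refine Finset.sum_congr rfl fun v _ => ?_
    have : T.filter (fun t => t.1 = v)
        = (G.neighborFinset v).offDiag.image (fun p => (v, p.1, p.2)) := by
      ext ⟨w, a, b⟩
      simp only [hT, mem_filter, mem_univ, true_and, mem_image, mem_offDiag,
        SimpleGraph.mem_neighborFinset, Prod.mk.injEq]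
      constructor
      · rintro ⟨⟨h1, h2, h3⟩, rfl⟩
        exact ⟨(a, b), ⟨h1, h2, h3⟩, rfl, rfl, rfl⟩
      · rintro ⟨⟨x, y⟩, ⟨h1, h2, h3⟩, rfl, rfl, rfl⟩
        exact ⟨⟨h1, h2, h3⟩, rfl⟩
    rw [this, Finset.card_image_of_injective _ (by intro p q h; simpa [Prod.ext_iff] using h),
      Finset.offDiag_card, SimpleGraph.card_neighborFinset_eq_degree]
  -- upper: fiber over pair ≤ 1
  have h2 : T.card ≤ n * n - n := by
    rw [Finset.card_eq_sum_card_fiberwise (s := T) (t := (univ : Finset (Fin n)).offDiag)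
      (f := fun t : Fin n × Fin n × Fin n => (t.2.1, t.2.2)) ?_]
    · calc ∑ p ∈ (univ : Finset (Fin n)).offDiag,
            (T.filter (fun t => (t.2.1, t.2.2) = p)).card
          ≤ ∑ _p ∈ (univ : Finset (Fin n)).offDiag, 1 := by
            refine Finset.sum_le_sum fun p _ => ?_
            refine Finset.card_le_one.2 ?_
            rintro ⟨v, a, b⟩ hv ⟨w, a', b'⟩ hw
            simp only [hT, mem_filter, mem_univ, true_and, Prod.mk.injEq] at hv hw
            obtain ⟨⟨hva, hvb, hab⟩, rfl, rfl⟩ := hv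
            obtain ⟨⟨hwa, hwb, -⟩, rfl, rfl⟩ := hw
            rcases hC4free v a w b hva hwa.symm hwb hvb.symm with h | h
            · simp [h]
            · exact absurd h hab
        _ = n * n - n := by
            rw [Finset.sum_const, smul_eq_mul, mul_one, Finset.offDiag_card]
            simp
    · intro t ht
      simp only [hT, Finset.mem_coe, mem_filter] at ht
      simp [Finset.mem_offDiag, ht.2.2.2]
  omega

/-- Kővári–Sós–Turán bound for `C₄`: any `C₄`-free graph on `n ≥ 1` vertices has at most
`(1/2) n^(3/2) + (1/2) n` edges.  (`C₄`-free: there are no four distinct vertices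
`a, b, c, d` with `a ~ b`, `b ~ c`, `c ~ d`, `d ~ a`; for a simple graph this is equivalent
to the disjunction `a = c ∨ b = d` below.) -/
theorem kst_C4 (n : ℕ) (hn : 1 ≤ n) (G : SimpleGraph (Fin n)) [DecidableRel G.Adj]
    (hC4free : ∀ a b c d : Fin n, G.Adj a b → G.Adj b c → G.Adj c d → G.Adj d a →
      a = c ∨ b = d) :
    (G.edgeFinset.card : ℝ) ≤ (1 / 2) * (n : ℝ) ^ ((3 : ℝ) / 2) + (1 / 2) * n := by
  classical
  have key := kst_C4_key n G hC4free
  -- nat inequality: ∑ d v ^ 2 ≤ (n*n - n) + ∑ d v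
  have key2 : ∑ v : Fin n, G.degree v * G.degree v ≤ (n * n - n) + ∑ v : Fin n, G.degree v := by
    have : ∑ v : Fin n, G.degree v * G.degree v
        ≤ (∑ v : Fin n, (G.degree v * G.degree v - G.degree v)) + ∑ v : Fin n, G.degree v := by
      rw [← Finset.sum_add_distrib]
      refine Finset.sum_le_sum fun v _ => ?_
      omega
    omega
  have hdeg : ∑ v : Fin n, G.degree v = 2 * G.edgeFinset.card :=
    SimpleGraph.sum_degrees_eq_twice_card_edges G
  -- move to ℝ
  set m : ℝ := (G.edgeFinset.card : ℝ) with hm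
  have hm0 : 0 ≤ m := by positivity
  have hnn : (1:ℕ) ≤ n * n := Nat.one_le_iff_ne_zero.2 (by positivity)
  have keyR : ∑ v : Fin n, (G.degree v : ℝ) ^ 2 ≤ (n : ℝ) * n - n + 2 * m := by
    have hsub : n ≤ n * n := Nat.le_mul_of_pos_left n (by omega)
    have h := (Nat.cast_le (α := ℝ)).2 key2
    rw [Nat.cast_add, Nat.cast_sub hsub, hdeg] at h
    push_cast at h
    simpa [sq, hm] using h
  have cs : (2 * m) ^ 2 ≤ (n : ℝ) * ∑ v : Fin n, (G.degree v : ℝ) ^ 2 := by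
    have h := sq_sum_le_card_mul_sum_sq (s := (univ : Finset (Fin n)))
      (f := fun v => (G.degree v : ℝ))
    have hsum : ∑ v : Fin n, (G.degree v : ℝ) = 2 * m := by
      have h2 := congrArg (fun k : ℕ => (k : ℝ)) hdeg
      push_cast at h2; simpa [hm] using h2
    simpa [hsum, Finset.card_univ] using h
  have hquad : 4 * m ^ 2 ≤ 2 * (n : ℝ) * m + (n:ℝ)^3 - (n:ℝ)^2 := by
    have := le_trans cs (mul_le_mul_of_nonneg_left keyR (by positivity : (0:ℝ) ≤ n))
    ring_nf at this ⊢
    nlinarith [this]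
  -- sqrt manipulation
  have hnpos : (0:ℝ) < n := by exact_mod_cast hn
  set s : ℝ := Real.sqrt n with hs
  have hs0 : 0 ≤ s := Real.sqrt_nonneg _
  have hs2 : s ^ 2 = n := Real.sq_sqrt hnpos.le
  have hs1 : 1 ≤ s := by
    nlinarith [hs2, (by exact_mod_cast hn : (1:ℝ) ≤ n)]
  have hrpow : (n : ℝ) ^ ((3:ℝ)/2) = n * s := by
    have : (3:ℝ)/2 = 1 + 1/2 := by norm_num
    rw [this, Real.rpow_add hnpos, Real.rpow_one, hs, Real.sqrt_eq_rpow]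
  rw [hrpow]
  nlinarith [mul_pos hnpos hnpos, sq_nonneg (2*m - n*s - n), hs2, hs1, hm0,
    mul_nonneg (mul_nonneg hnpos.le hnpos.le) (sub_nonneg.2 hs1)]
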